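/- arXiv:2207.01589 — 2 statements merged into one kernel-verified Lean document; each statement's English description precedes it below -/
import Mathlib

section
/- Let I be a repeated matching instance with n ≥ 2 agents/items and T rounds such that T mod n ∈ {n−2, n−1}, with arbitrary real-valued valuations (mixed items). Then there exists a repeated matching of I that is swapEF. -/
open Finset
open Fin.CommRing

/-- The number of rounds in which agent `i` is matched to item `g`
under the repeated matching `A` (a sequence of `T` bijections from agents to items). -/
def mult {α β : Type*} [DecidableEq β] {T : ℕ} (A : Fin T → α ≃ β) (i : α) (g : β) : ℕ :=
  (Finset.univ.filter fun t : Fin T => A t i = g).card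

/-- The value of a bundle with multiplicities `B` under the valuation `v`,
where `v g t` is the value of the `t`-th copy of item `g`. -/
def bundleValue {β : Type*} [Fintype β] (v : β → ℕ → ℝ) (B : β → ℕ) : ℝ :=
  ∑ g : β, ∑ t ∈ Finset.range (B g), v g (t + 1)

/-- The social welfare of a repeated matching. -/
def SW {α β : Type*} [Fintype α] [Fintype β] [DecidableEq β] {T : ℕ}
    (v : α → β → ℕ → ℝ) (A : Fin T → α ≃ β) : ℝ :=
  ∑ i : α, bundleValue (v i) (mult A i)

/-- Remove one copy of `g` from the bundle `B` (if present; otherwise leave `B` intact). -/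
def removeOne {β : Type*} [DecidableEq β] (B : β → ℕ) (g : β) : β → ℕ :=
  fun g' => if g' = g then B g' - 1 else B g'

/-- `EF1`: every agent `i` values her bundle at least as much as any other agent `j`'s
bundle after removing one copy of some item. -/
def EF1 {α β : Type*} [Fintype β] [DecidableEq β] {T : ℕ}
    (v : α → β → ℕ → ℝ) (A : Fin T → α ≃ β) : Prop :=
  ∀ i j : α, ∃ g : β,
    bundleValue (v i) (mult A i) ≥ bundleValue (v i) (removeOne (mult A j) g)

/-- Replace one copy of `gout` by one copy of `gin` in the bundle `B`. -/
def swapBundle {β : Type*} [DecidableEq β] (B : β → ℕ) (gout gin : β) : β → ℕ :=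
  fun g => (B g + if g = gin then 1 else 0) - (if g = gout then 1 else 0)

/-- `swapEF`: for every pair of agents `i, j`, either `i` does not envy `j`, or the
envy disappears after swapping a copy of some item of `i` with a copy of some item
of `j`. -/
def swapEF {α β : Type*} [Fintype β] [DecidableEq β] {T : ℕ}
    (v : α → β → ℕ → ℝ) (A : Fin T → α ≃ β) : Prop :=
  ∀ i j : α,
    bundleValue (v i) (mult A i) ≥ bundleValue (v i) (mult A j) ∨
    ∃ gi gj : β, 1 ≤ mult A i gi ∧ 1 ≤ mult A j gj ∧
      bundleValue (v i) (swapBundle (mult A i) gi gj) ≥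
        bundleValue (v i) (swapBundle (mult A j) gj gi)

/-- Bundle with `q+1` copies of every item except `q` copies of `a` and of `b`. -/
def pairB {n : ℕ} (q : ℕ) (a b : Fin n) : Fin n → ℕ :=
  fun g => if g = a ∨ g = b then q else q + 1

/-- Bundle with `q+1` copies of every item except `q` copies of `a`. -/
def oneB {n : ℕ} (q : ℕ) (a : Fin n) : Fin n → ℕ := fun g => if g = a then q else q + 1

lemma pairB_comm {n : ℕ} (q : ℕ) (a b : Fin n) : pairB q a b = pairB q b a := by
  funext g; simp [pairB, or_comm]

lemma pairB_pos {n : ℕ} (q : ℕ) (a b c : Fin n) (h1 : c ≠ a) (h2 : c ≠ b) :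
    1 ≤ pairB q a b c := by simp [pairB, h1, h2]

lemma oneB_pos {n : ℕ} (q : ℕ) (a c : Fin n) (h1 : c ≠ a) : 1 ≤ oneB q a c := by
  simp [oneB, h1]

lemma swap_pairB {n : ℕ} (q : ℕ) (a b c : Fin n) (hab : a ≠ b) (hca : c ≠ a) (hcb : c ≠ b) :
    swapBundle (pairB q a b) c a = pairB q b c := by
  funext g
  simp only [swapBundle, pairB]
  by_cases h1 : g = a <;> by_cases h2 : g = b <;> by_cases h3 : g = c <;> simp_all

lemma swap_oneB {n : ℕ} (q : ℕ) (a c : Fin n) (hca : c ≠ a) :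
    swapBundle (oneB q a) c a = oneB q c := by
  funext g
  simp only [swapBundle, oneB]
  by_cases h1 : g = a <;> by_cases h3 : g = c <;> simp_all

lemma val_pairB {n : ℕ} (v : Fin n → ℕ → ℝ) (q : ℕ) (a b : Fin n) (hab : a ≠ b) :
    bundleValue v (pairB q a b) =
      (∑ g : Fin n, ∑ t ∈ Finset.range (q+1), v g (t+1)) - v a (q+1) - v b (q+1) := by
  unfold bundleValue pairB
  have key : ∀ g : Fin n, ∑ t ∈ Finset.range (if g = a ∨ g = b then q else q+1), v g (t+1)
      = (∑ t ∈ Finset.range (q+1), v g (t+1))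
        - ((if g = a then v g (q+1) else 0) + (if g = b then v g (q+1) else 0)) := by
    intro g
    by_cases ha : g = a
    · subst ha; rw [if_pos (Or.inl rfl), if_pos rfl, if_neg hab, Finset.sum_range_succ]; ring
    · by_cases hb : g = b
      · subst hb; rw [if_pos (Or.inr rfl), if_neg ha, if_pos rfl, Finset.sum_range_succ]; ring
      · rw [if_neg (by tauto), if_neg ha, if_neg hb]; ring
  rw [Finset.sum_congr rfl (fun g _ => key g), Finset.sum_sub_distrib, Finset.sum_add_distrib,
    Finset.sum_ite_eq' univ a (fun g => v g (q+1)), Finset.sum_ite_eq' univ b (fun g => v g (q+1))]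
  simp; ring

lemma val_oneB {n : ℕ} (v : Fin n → ℕ → ℝ) (q : ℕ) (a : Fin n) :
    bundleValue v (oneB q a) =
      (∑ g : Fin n, ∑ t ∈ Finset.range (q+1), v g (t+1)) - v a (q+1) := by
  unfold bundleValue oneB
  have key : ∀ g : Fin n, ∑ t ∈ Finset.range (if g = a then q else q+1), v g (t+1)
      = (∑ t ∈ Finset.range (q+1), v g (t+1)) - (if g = a then v g (q+1) else 0) := by
    intro g
    by_cases ha : g = a
    · subst ha; rw [if_pos rfl, if_pos rfl, Finset.sum_range_succ]; ring
    · rw [if_neg ha, if_neg ha]; ring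
  rw [Finset.sum_congr rfl (fun g _ => key g), Finset.sum_sub_distrib,
    Finset.sum_ite_eq' univ a (fun g => v g (q+1))]
  simp

lemma count_mod (T n r : ℕ) (hn : 1 < n) (hr : r < n) :
    ((Finset.range T).filter fun m => m % n = r).card = T / n + if r < T % n then 1 else 0 := by
  induction T with
  | zero => simp
  | succ T ih =>
    rw [Finset.range_add_one, Finset.filter_insert]
    have hTn : T % n < n := Nat.mod_lt _ (by omega)
    have h1m : 1 % n = 1 := Nat.mod_eq_of_lt hn
    by_cases hd : T % n + 1 = n
    · have h1 : (T+1) % n = 0 := by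
        rw [Nat.add_mod, h1m, hd, Nat.mod_self]
      have h2 : (T+1) / n = T / n + 1 := by
        rw [Nat.succ_div, if_pos (Nat.dvd_iff_mod_eq_zero.mpr h1)]
      by_cases hr' : T % n = r
      · rw [if_pos hr', Finset.card_insert_of_notMem (by simp), ih, h1, h2]
        split_ifs <;> omega
      · rw [if_neg hr', ih, h1, h2]
        split_ifs <;> omega
    · have h1 : (T+1) % n = T % n + 1 := by
        rw [Nat.add_mod, h1m, Nat.mod_eq_of_lt (by omega)]
      have h2 : (T+1) / n = T / n := by
        rw [Nat.succ_div, if_neg, add_zero]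
        intro hdvd
        have := Nat.dvd_iff_mod_eq_zero.mp hdvd
        omega
      by_cases hr' : T % n = r
      · rw [if_pos hr', Finset.card_insert_of_notMem (by simp), ih, h1, h2]
        split_ifs <;> omega
      · rw [if_neg hr', ih, h1, h2]
        split_ifs <;> omega

lemma mult_shift {n T : ℕ} (hn : 2 ≤ n) [NeZero n] (i g : Fin n) :
    mult (fun t : Fin T => Equiv.addRight (((t : ℕ) : Fin n))) i g
      = T / n + if ((g - i : Fin n) : ℕ) < T % n then 1 else 0 := by
  unfold mult
  have h1 : ∀ t : Fin T,
      ((Equiv.addRight (((t : ℕ) : Fin n))) i = g) ↔ ((t : ℕ) % n = ((g - i : Fin n) : ℕ)) := by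
    intro t
    rw [Equiv.coe_addRight]
    constructor
    · intro h
      have : ((t : ℕ) : Fin n) = g - i := by rw [← h]; ring
      rw [← this, Fin.val_natCast]
    · intro h
      have : ((t : ℕ) : Fin n) = g - i := by
        rw [Fin.ext_iff, Fin.val_natCast]; exact h
      rw [this]; ring
  rw [Finset.filter_congr (fun t _ => h1 t)]
  rw [Finset.card_filter,
    Fin.sum_univ_eq_sum_range (fun m => if m % n = ((g - i : Fin n) : ℕ) then 1 else 0),
    ← Finset.card_filter]
  exact count_mod T n _ hn ((g - i).isLt)

/-- For mixed items (arbitrary real-valued valuations) with `n ≥ 2` and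
`T mod n ∈ {n-2, n-1}`, a swapEF repeated matching exists. -/
theorem stmt14 (n T : ℕ) (hn : 2 ≤ n) (hmod : T % n = n - 2 ∨ T % n = n - 1)
    (v : Fin n → Fin n → ℕ → ℝ) :
    ∃ A : Fin T → Fin n ≃ Fin n, swapEF v A := by
  haveI : NeZero n := ⟨by omega⟩
  refine ⟨fun t : Fin T => Equiv.addRight (((t : ℕ) : Fin n)), ?_⟩
  have hmult := fun (i g : Fin n) => mult_shift (T := T) hn i g
  intro i j
  by_cases hij : i = j
  · left; subst hij; exact le_refl _
  have hc1 : (1 : Fin n) ≠ 0 := by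
    intro h
    have := congrArg Fin.val h
    rw [Fin.val_one', Nat.mod_eq_of_lt hn, Fin.val_zero] at this
    omega
  rcases hmod with hs | hs
  · -- T % n = n - 2
    by_cases hs0 : T % n = 0
    · left
      have hbb : ∀ i' : Fin n,
          mult (fun t : Fin T => Equiv.addRight (((t : ℕ) : Fin n))) i' = fun _ => T / n := by
        intro i'; funext g; rw [hmult, hs0]; simp
      rw [hbb i, hbb j]
    · have hn3 : 3 ≤ n := by omega
      have hc2 : (2 : Fin n) ≠ 0 := by
        have h2 : ((2 : ℕ) : Fin n) = (2 : Fin n) := by norm_cast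
        intro h
        have := congrArg Fin.val (h2.trans h)
        rw [Fin.val_natCast, Nat.mod_eq_of_lt (by omega), Fin.val_zero] at this
        omega
      set E2 : Fin n := ((n - 2 : ℕ) : Fin n) with hE2
      have hv2 : (E2 : ℕ) = n - 2 := by rw [hE2, Fin.val_natCast]; exact Nat.mod_eq_of_lt (by omega)
      have hv1 : ((E2 + 1 : Fin n) : ℕ) = n - 1 := by
        have hcast : E2 + 1 = ((n - 1 : ℕ) : Fin n) := by
          rw [hE2, show n - 1 = (n - 2) + 1 from by omega, Nat.cast_add, Nat.cast_one]
        rw [hcast, Fin.val_natCast]; exact Nat.mod_eq_of_lt (by omega)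
      have hb : ∀ i' : Fin n,
          mult (fun t : Fin T => Equiv.addRight (((t : ℕ) : Fin n))) i'
            = pairB (T / n) (i' + E2) (i' + E2 + 1) := by
        intro i'; funext g
        rw [hmult, hs]
        have e1 : g = i' + E2 ↔ ((g - i' : Fin n) : ℕ) = n - 2 := by
          constructor
          · intro h
            have h' : g - i' = E2 := by rw [h]; ring
            rw [h', hv2]
          · intro h
            have h' : g - i' = E2 := Fin.ext (by rw [h, hv2])
            rw [← h']; ring
        have e2 : g = i' + E2 + 1 ↔ ((g - i' : Fin n) : ℕ) = n - 1 := by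
          constructor
          · intro h
            have h' : g - i' = E2 + 1 := by linear_combination h
            rw [h', hv1]
          · intro h
            have h' : g - i' = E2 + 1 := Fin.ext (by rw [h, hv1])
            linear_combination h'
        have hlt : ((g - i' : Fin n) : ℕ) < n := (g - i').isLt
        simp only [pairB, e1, e2]
        split_ifs <;> omega
      by_cases hji1 : j = i + 1
      · -- adjacent: the pairs of missing items overlap
        subst hji1
        set x : Fin n := i + E2 with hx
        have hbj : mult (fun t : Fin T => Equiv.addRight (((t : ℕ) : Fin n))) (i + 1)
            = pairB (T / n) (x + 1) (x + 1 + 1) := by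
          rw [hb, show i + 1 + E2 = x + 1 from by rw [hx]; ring]
        have h1x : x + 1 ≠ x := fun h => hc1 (by linear_combination h)
        have hd : x + 1 + 1 ≠ x := fun h => hc2 (by linear_combination h)
        have hdx1 : x + 1 + 1 ≠ x + 1 := fun h => hc1 (by linear_combination h)
        have sI : swapBundle (pairB (T / n) x (x + 1)) (x + 1 + 1) x
            = pairB (T / n) (x + 1) (x + 1 + 1) :=
          swap_pairB _ x (x + 1) (x + 1 + 1) h1x.symm hd hdx1
        have sJ : swapBundle (pairB (T / n) (x + 1) (x + 1 + 1)) x (x + 1 + 1)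
            = pairB (T / n) (x + 1) x := by
          rw [pairB_comm]
          exact swap_pairB _ (x + 1 + 1) (x + 1) x hdx1 hd.symm h1x.symm
        rcases le_total
            (bundleValue (v i) (mult (fun t : Fin T => Equiv.addRight (((t : ℕ) : Fin n))) (i + 1)))
            (bundleValue (v i) (mult (fun t : Fin T => Equiv.addRight (((t : ℕ) : Fin n))) i))
            with h | h
        · left; exact h
        · right
          refine ⟨x + 1 + 1, x, ?_, ?_, ?_⟩
          · rw [hb i]; exact pairB_pos _ _ _ _ hd hdx1
          · rw [hbj]; exact pairB_pos _ _ _ _ h1x.symm hd.symm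
          · rw [hb i, hbj, sI, sJ, val_pairB _ _ _ _ hdx1.symm, val_pairB _ _ _ _ h1x]
            rw [hb i, hbj, val_pairB _ _ _ _ h1x.symm, val_pairB _ _ _ _ hdx1.symm] at h
            linarith
      · by_cases hij1 : i = j + 1
        · -- adjacent the other way
          subst hij1
          set y : Fin n := j + E2 with hy
          have hbi : mult (fun t : Fin T => Equiv.addRight (((t : ℕ) : Fin n))) (j + 1)
              = pairB (T / n) (y + 1) (y + 1 + 1) := by
            rw [hb, show j + 1 + E2 = y + 1 from by rw [hy]; ring]
          have h1y : y + 1 ≠ y := fun h => hc1 (by linear_combination h)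
          have hd : y + 1 + 1 ≠ y := fun h => hc2 (by linear_combination h)
          have hdy1 : y + 1 + 1 ≠ y + 1 := fun h => hc1 (by linear_combination h)
          have sI : swapBundle (pairB (T / n) (y + 1) (y + 1 + 1)) y (y + 1 + 1)
              = pairB (T / n) (y + 1) y := by
            rw [pairB_comm]
            exact swap_pairB _ (y + 1 + 1) (y + 1) y hdy1 hd.symm h1y.symm
          have sJ : swapBundle (pairB (T / n) y (y + 1)) (y + 1 + 1) y
              = pairB (T / n) (y + 1) (y + 1 + 1) :=
            swap_pairB _ y (y + 1) (y + 1 + 1) h1y.symm hd hdy1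
          rcases le_total
              (bundleValue (v (j + 1)) (mult (fun t : Fin T => Equiv.addRight (((t : ℕ) : Fin n))) j))
              (bundleValue (v (j + 1)) (mult (fun t : Fin T => Equiv.addRight (((t : ℕ) : Fin n))) (j + 1)))
              with h | h
          · left; exact h
          · right
            refine ⟨y, y + 1 + 1, ?_, ?_, ?_⟩
            · rw [hbi]; exact pairB_pos _ _ _ _ h1y.symm hd.symm
            · rw [hb j]; exact pairB_pos _ _ _ _ hd hdy1
            · rw [hbi, hb j, sI, sJ, val_pairB _ _ _ _ hdy1.symm, val_pairB _ _ _ _ h1y]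
              rw [hbi, hb j, val_pairB _ _ _ _ hdy1.symm, val_pairB _ _ _ _ h1y.symm] at h
              linarith
        · -- disjoint missing pairs
          set a : Fin n := i + E2 with ha
          set c : Fin n := j + E2 with hc
          have hbi : mult (fun t : Fin T => Equiv.addRight (((t : ℕ) : Fin n))) i
              = pairB (T / n) a (a + 1) := hb i
          have hbj : mult (fun t : Fin T => Equiv.addRight (((t : ℕ) : Fin n))) j
              = pairB (T / n) c (c + 1) := hb j
          have ha1 : a ≠ a + 1 := fun h => hc1 (by linear_combination -h)
          have hc1' : c ≠ c + 1 := fun h => hc1 (by linear_combination -h)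
          have hac : a ≠ c := fun h => hij (add_right_cancel h)
          have hbd : a + 1 ≠ c + 1 := fun h => hac (add_right_cancel h)
          have had : a ≠ c + 1 := fun h => hij1 (by rw [ha, hc] at h; linear_combination h)
          have hbc : a + 1 ≠ c := fun h => hji1 (by rw [ha, hc] at h; linear_combination -h)
          rcases le_total (v i a (T / n + 1) + v i (c + 1) (T / n + 1))
              (v i (a + 1) (T / n + 1) + v i c (T / n + 1)) with h | h
          · right
            refine ⟨c + 1, a + 1, ?_, ?_, ?_⟩
            · rw [hbi]; exact pairB_pos _ _ _ _ had.symm hbd.symm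
            · rw [hbj]; exact pairB_pos _ _ _ _ hbc hbd
            · have sI : swapBundle (pairB (T / n) a (a + 1)) (c + 1) (a + 1)
                  = pairB (T / n) a (c + 1) := by
                rw [pairB_comm]
                exact swap_pairB _ (a + 1) a (c + 1) ha1.symm hbd.symm had.symm
              have sJ : swapBundle (pairB (T / n) c (c + 1)) (a + 1) (c + 1)
                  = pairB (T / n) c (a + 1) := by
                rw [pairB_comm]
                exact swap_pairB _ (c + 1) c (a + 1) hc1'.symm hbd hbc
              rw [hbi, hbj, sI, sJ, val_pairB _ _ _ _ had, val_pairB _ _ _ _ hbc.symm]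
              linarith
          · right
            refine ⟨c, a, ?_, ?_, ?_⟩
            · rw [hbi]; exact pairB_pos _ _ _ _ hac.symm hbc.symm
            · rw [hbj]; exact pairB_pos _ _ _ _ hac had
            · have sI : swapBundle (pairB (T / n) a (a + 1)) c a
                  = pairB (T / n) (a + 1) c :=
                swap_pairB _ a (a + 1) c ha1 hac.symm hbc.symm
              have sJ : swapBundle (pairB (T / n) c (c + 1)) a c
                  = pairB (T / n) (c + 1) a :=
                swap_pairB _ c (c + 1) a hc1' hac had
              rw [hbi, hbj, sI, sJ, val_pairB _ _ _ _ hbc, val_pairB _ _ _ _ had.symm]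
              linarith
  · -- T % n = n - 1
    set E1 : Fin n := ((n - 1 : ℕ) : Fin n) with hE1
    have hv1 : (E1 : ℕ) = n - 1 := by rw [hE1, Fin.val_natCast]; exact Nat.mod_eq_of_lt (by omega)
    have hb : ∀ i' : Fin n,
        mult (fun t : Fin T => Equiv.addRight (((t : ℕ) : Fin n))) i'
          = oneB (T / n) (i' + E1) := by
      intro i'; funext g
      rw [hmult, hs]
      have e1 : g = i' + E1 ↔ ((g - i' : Fin n) : ℕ) = n - 1 := by
        constructor
        · intro h
          have h' : g - i' = E1 := by rw [h]; ring
          rw [h', hv1]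
        · intro h
          have h' : g - i' = E1 := Fin.ext (by rw [h, hv1])
          rw [← h']; ring
      have hlt : ((g - i' : Fin n) : ℕ) < n := (g - i').isLt
      simp only [oneB, e1]
      split_ifs <;> omega
    have hne : i + E1 ≠ j + E1 := fun h => hij (add_right_cancel h)
    rcases le_total (bundleValue (v i) (mult (fun t : Fin T => Equiv.addRight (((t : ℕ) : Fin n))) i))
        (bundleValue (v i) (mult (fun t : Fin T => Equiv.addRight (((t : ℕ) : Fin n))) j)) with h | h
    · right
      refine ⟨j + E1, i + E1, ?_, ?_, ?_⟩
      · rw [hb i]; exact oneB_pos _ _ _ hne.symm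
      · rw [hb j]; exact oneB_pos _ _ _ hne
      · rw [hb i, hb j, swap_oneB _ _ _ hne.symm, swap_oneB _ _ _ hne,
          val_oneB, val_oneB]
        rw [hb i, hb j, val_oneB, val_oneB] at h
        linarith
    · left; exact h
end

section
/- Consider the repeated matching instance with n = 2 agents, two items g_1 and g_2, T = 1 round, and identical valuations v_1 = v_2 = v given by v(g_1,1) = 1 and v(g_2,1) = −1 (one good and one chore). Then no repeated matching of this instance is EF1 for mixed items: for each of the two possible matchings, the agent receiving g_2 witnesses a violation, i.e., there is no item g for which either v(A_i \ {g}) ≥ v(A_j) or v(A_i) ≥ v(A_j \ {g}) holds for that agent i against the other agent j. -/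
open Finset

/-- `EF1` for mixed items: for every pair of agents `i, j` there is an item whose
removal from either `i`'s or `j`'s bundle eliminates the envy of `i` towards `j`. -/
def EF1mixed {α β : Type*} [Fintype β] [DecidableEq β] {T : ℕ}
    (v : α → β → ℕ → ℝ) (A : Fin T → α ≃ β) : Prop :=
  ∀ i j : α, ∃ g : β,
    bundleValue (v i) (removeOne (mult A i) g) ≥ bundleValue (v i) (mult A j) ∨
    bundleValue (v i) (mult A i) ≥ bundleValue (v i) (removeOne (mult A j) g)

/-- With two agents, one good (item `0`, value `1`) and one chore (item `1`,
value `-1`) and a single round, no repeated matching is EF1 for mixed items;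
the agent receiving the chore witnesses the violation. -/
theorem stmt16 (v : Fin 2 → ℕ → ℝ) (hv0 : v 0 1 = 1) (hv1 : v 1 1 = -1) :
    ∀ A : Fin 1 → Fin 2 ≃ Fin 2,
      ¬ EF1mixed (fun _ : Fin 2 => v) A ∧
      ∀ i j : Fin 2, A 0 i = 1 → j ≠ i →
        ¬ ∃ g : Fin 2,
          (bundleValue v (removeOne (mult A i) g) ≥ bundleValue v (mult A j) ∨
           bundleValue v (mult A i) ≥ bundleValue v (removeOne (mult A j) g)) := by

  intro A
  have hmult : ∀ i g : Fin 2, mult A i g = if A 0 i = g then 1 else 0 := by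
    intro i g
    simp only [mult, Finset.univ_unique, Finset.filter_singleton]
    split_ifs <;> simp_all
  have key : ∀ i j : Fin 2, A 0 i = 1 → j ≠ i →
      ¬ ∃ g : Fin 2,
        (bundleValue v (removeOne (mult A i) g) ≥ bundleValue v (mult A j) ∨
         bundleValue v (mult A i) ≥ bundleValue v (removeOne (mult A j) g)) := by
    rintro i j hi hj ⟨g, hg⟩
    have hji : A 0 j = 0 := by
      have h1 : A 0 j ≠ 1 := fun h => hj ((A 0).injective (h.trans hi.symm))
      have h2 : (A 0 j).val ≠ 1 := fun h => h1 (Fin.ext h)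
      have h3 := (A 0 j).isLt
      exact Fin.ext (by omega)
    have hbi : bundleValue v (mult A i) = -1 := by
      simp [bundleValue, Fin.sum_univ_two, hmult, hi, Finset.sum_range_succ, hv1]
    have hbj : bundleValue v (mult A j) = 1 := by
      simp [bundleValue, Fin.sum_univ_two, hmult, hji, Finset.sum_range_succ, hv0]
    fin_cases g <;>
      simp [bundleValue, removeOne, Fin.sum_univ_two, hmult, hi, hji,
        Finset.sum_range_succ, hv0, hv1] at hg <;> linarith
  refine ⟨fun h => ?_, key⟩
  set i := (A 0).symm 1 with hidef
  set j := (A 0).symm 0 with hjdef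
  have hi : A 0 i = 1 := (A 0).apply_symm_apply 1
  have hj : j ≠ i := fun h => by
    have : (0 : Fin 2) = 1 := by
      have := congrArg (A 0) h
      rwa [hidef, hjdef, (A 0).apply_symm_apply, (A 0).apply_symm_apply] at this
    exact absurd this (by decide)
  exact key i j hi hj (h i j)
end
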